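/- Gradient descent on separable logistic regression initialized at w_0 = 0 with the schedule η_0 = 1/ln 2 and η_t = S_{t-1}/(2·max{2F(w_0), ln²(S_{t-1})}) for t ≥ 1, where S_t = γ²∑_{k=0}^t η_k and F(w_0) = (1/n)∑_i exp(-y_i⟨x_i,w_0⟩), satisfies L(w_t) ≤ 1/η_t for all t ≥ 0; consequently the loss iterates are monotonically non-increasing. -/

import Mathlib

set_option maxHeartbeats 1000000

noncomputable def lg (z : ℝ) : ℝ := Real.log (1 + Real.exp (-z))
noncomputable def lg' (z : ℝ) : ℝ := -(1 + Real.exp z)⁻¹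
noncomputable def lg'' (z : ℝ) : ℝ := Real.exp z / (1 + Real.exp z) ^ 2

lemma one_add_exp_pos (z : ℝ) : 0 < 1 + Real.exp z := by positivity

lemma lg_pos (z : ℝ) : 0 < lg z :=
  Real.log_pos (by have := Real.exp_pos (-z); linarith)

lemma lg'_neg (z : ℝ) : lg' z < 0 := by
  have := one_add_exp_pos z
  simp only [lg', neg_lt, neg_zero]; positivity

lemma inv_le_log (u : ℝ) (hu : 0 ≤ u) : u / (1 + u) ≤ Real.log (1 + u) := by
  have h1 : (0:ℝ) < 1 + u := by linarith
  have := Real.log_le_sub_one_of_pos (x := (1 + u)⁻¹) (by positivity)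
  rw [Real.log_inv] at this
  have h2 : (1 + u)⁻¹ - 1 = -(u / (1 + u)) := by field_simp; ring
  linarith [this.trans_eq h2]

lemma neg_lg'_eq (z : ℝ) : -lg' z = Real.exp (-z) / (1 + Real.exp (-z)) := by
  have h1 := one_add_exp_pos z
  have h2 := one_add_exp_pos (-z)
  have he : Real.exp (-z) * Real.exp z = 1 := by
    rw [← Real.exp_add]; simp
  simp only [lg', neg_neg]
  field_simp
  nlinarith [Real.exp_pos z, Real.exp_pos (-z)]

lemma neg_lg'_le_lg (z : ℝ) : -lg' z ≤ lg z := by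
  rw [neg_lg'_eq]; exact inv_le_log _ (Real.exp_pos _).le

lemma lg''_eq (z : ℝ) : lg'' z = Real.exp (-z) / (1 + Real.exp (-z)) ^ 2 := by
  have he : Real.exp (-z) * Real.exp z = 1 := by rw [← Real.exp_add]; simp
  have h1 := one_add_exp_pos z
  have h2 := one_add_exp_pos (-z)
  simp only [lg'']
  rw [div_eq_div_iff (by positivity) (by positivity)]
  nlinarith [Real.exp_pos z, Real.exp_pos (-z)]

lemma lg''_nonneg (z : ℝ) : 0 ≤ lg'' z := by
  have := one_add_exp_pos z; simp only [lg'']; positivity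

lemma lg''_le_lg (z : ℝ) : lg'' z ≤ lg z := by
  rw [lg''_eq]
  have h2 := one_add_exp_pos (-z)
  calc Real.exp (-z) / (1 + Real.exp (-z)) ^ 2 ≤ Real.exp (-z) / (1 + Real.exp (-z)) := by
        apply div_le_div_of_nonneg_left (Real.exp_pos _).le h2
        nlinarith [Real.exp_pos (-z)]
    _ ≤ lg z := inv_le_log _ (Real.exp_pos _).le

lemma lg_le_exp_neg (z : ℝ) : lg z ≤ Real.exp (-z) := by
  have := Real.log_le_sub_one_of_pos (x := 1 + Real.exp (-z)) (one_add_exp_pos _)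
  simpa [lg] using this

lemma lg_anti : Antitone lg := by
  intro a b hab
  have : Real.exp (-b) ≤ Real.exp (-a) := Real.exp_le_exp.2 (by linarith)
  exact Real.log_le_log (one_add_exp_pos _) (by linarith)

lemma lg'_mono : Monotone lg' := by
  intro a b hab
  simp only [lg', neg_le_neg_iff]
  apply inv_anti₀ (one_add_exp_pos _)
  have := Real.exp_le_exp.2 hab; linarith

lemma lg_crude (z t : ℝ) (ht : 0 ≤ t) : lg (z - t) ≤ Real.exp t * lg z := by
  have hp : 1 ≤ Real.exp t := Real.one_le_exp ht
  have hs : (0:ℝ) ≤ Real.exp (-z) := (Real.exp_pos _).le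
  have hb : 1 + Real.exp t * Real.exp (-z) ≤ (1 + Real.exp (-z)) ^ (Real.exp t) :=
    one_add_mul_self_le_rpow_one_add (by linarith) hp
  have h1 : lg (z - t) = Real.log (1 + Real.exp t * Real.exp (-z)) := by
    rw [lg, ← Real.exp_add]; ring_nf
  rw [h1]
  calc Real.log (1 + Real.exp t * Real.exp (-z))
      ≤ Real.log ((1 + Real.exp (-z)) ^ (Real.exp t)) := by
        apply Real.log_le_log (by positivity) hb
    _ = Real.exp t * lg z := by
        rw [Real.log_rpow (one_add_exp_pos _)]; rfl

lemma hasDerivAt_lg (z : ℝ) : HasDerivAt lg (lg' z) z := by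
  have h1 : HasDerivAt (fun z : ℝ => 1 + Real.exp (-z)) (-Real.exp (-z)) z := by
    simpa using ((hasDerivAt_neg z).exp.const_add 1)
  have h2 := h1.log (ne_of_gt (one_add_exp_pos (-z)))
  convert h2 using 1
  · rfl
  have he : Real.exp (-z) * Real.exp z = 1 := by rw [← Real.exp_add]; simp
  have hz1 := one_add_exp_pos z
  have hz2 := one_add_exp_pos (-z)
  rw [lg', neg_eq_iff_eq_neg, ← neg_div, neg_neg, eq_div_iff (ne_of_gt hz2),
    inv_mul_eq_div, div_eq_iff (ne_of_gt hz1)]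
  nlinarith

lemma hasDerivAt_lg' (z : ℝ) : HasDerivAt lg' (lg'' z) z := by
  have h1 : HasDerivAt (fun z : ℝ => 1 + Real.exp z) (Real.exp z) z := by
    simpa using (Real.hasDerivAt_exp z).const_add 1
  have h2 := (h1.inv (ne_of_gt (one_add_exp_pos z))).neg
  convert h2 using 1
  · rfl
  · rfl
  · rfl
  rw [lg'']; ring

lemma deriv_nonpos_aux (f f' : ℝ → ℝ) (hd : ∀ t, HasDerivAt f (f' t) t)
    (h0 : f 0 = 0) (hneg : ∀ t, 0 ≤ t → f' t ≤ 0) {t : ℝ} (ht : 0 ≤ t) : f t ≤ 0 := by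
  have hanti : AntitoneOn f (Set.Ici 0) := by
    apply antitoneOn_of_deriv_nonpos (convex_Ici 0)
    · exact fun u _ => (hd u).continuousAt.continuousWithinAt
    · exact fun u _ => (hd u).differentiableAt.differentiableWithinAt
    · intro u hu
      rw [(hd u).deriv]
      exact hneg u (le_of_lt (by simpa using hu))
  have := hanti (Set.self_mem_Ici) (by exact ht) ht
  linarith

lemma deriv_nonneg_aux (f f' : ℝ → ℝ) (hd : ∀ t, HasDerivAt f (f' t) t)
    (h0 : f 0 = 0) (hpos : ∀ t, 0 ≤ t → 0 ≤ f' t) {t : ℝ} (ht : 0 ≤ t) : 0 ≤ f t := by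
  have h := deriv_nonpos_aux (fun u => -f u) (fun u => -f' u)
    (fun u => (hd u).neg) (by simp [h0]) (fun u hu => by simpa using hpos u hu) ht
  linarith

lemma lg_convex (a b : ℝ) : lg a + lg' a * (b - a) ≤ lg b := by
  rcases le_total a b with hab | hab
  · have h := deriv_nonneg_aux (fun u => lg (a + u) - lg a - lg' a * u)
      (fun u => lg' (a + u) - lg' a)
      (fun u => by
        have h1 : HasDerivAt (fun u : ℝ => a + u) 1 u := by
          simpa using (hasDerivAt_id u).const_add a
        simpa [Pi.sub_def] using (((hasDerivAt_lg (a + u)).comp u h1).sub_const (lg a)).sub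
          ((hasDerivAt_id u).const_mul (lg' a)))
      (by simp)
      (fun u hu => by have := lg'_mono (by linarith : a ≤ a + u); linarith)
      (by linarith : (0:ℝ) ≤ b - a)
    simp only [add_sub_cancel] at h
    linarith
  · have h := deriv_nonneg_aux (fun u => lg (a - u) - lg a + lg' a * u)
      (fun u => -lg' (a - u) + lg' a)
      (fun u => by
        have h1 : HasDerivAt (fun u : ℝ => a - u) (-1) u := by
          simpa using ((hasDerivAt_id u).const_sub a)
        have h2 := (hasDerivAt_lg (a - u)).comp u h1
        simpa [mul_comm, Pi.add_def] using (((hasDerivAt_lg (a-u)).comp u h1).sub_const (lg a)).add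
          ((hasDerivAt_id u).const_mul (lg' a)))
      (by simp)
      (fun u hu => by have := lg'_mono (by linarith : a - u ≤ a); linarith)
      (by linarith : (0:ℝ) ≤ a - b)
    have hab' : a - (a - b) = b := by ring
    rw [hab'] at h
    linarith

lemma lg_taylor_pos (z h : ℝ) (hh : 0 ≤ h) :
    lg (z + h) ≤ lg z + lg' z * h + 1/2 * h^2 * lg z := by
  have H1 : ∀ u, 0 ≤ u → lg' (z + u) - lg' z - u * lg z ≤ 0 := by
    intro u hu
    apply deriv_nonpos_aux (fun u => lg' (z + u) - lg' z - u * lg z)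
      (fun u => lg'' (z + u) - lg z)
      (fun u => by
        have h1 : HasDerivAt (fun u : ℝ => z + u) 1 u := by
          simpa using (hasDerivAt_id u).const_add z
        simpa [Pi.sub_def] using (((hasDerivAt_lg' (z + u)).comp u h1).sub_const (lg' z)).sub
          ((hasDerivAt_id u).mul_const (lg z)))
      (by simp)
      (fun u hu => by
        have h2 := lg''_le_lg (z + u)
        have h3 := lg_anti (by linarith : z ≤ z + u)
        linarith)
      hu
  have H2 := deriv_nonpos_aux (fun u => lg (z + u) - lg z - lg' z * u - u^2/2 * lg z)
    (fun u => lg' (z + u) - lg' z - u * lg z)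
    (fun u => by
      have h1 : HasDerivAt (fun u : ℝ => z + u) 1 u := by
        simpa using (hasDerivAt_id u).const_add z
      have e1 := (((hasDerivAt_lg (z + u)).comp u h1).sub_const (lg z)).sub
        ((hasDerivAt_id u).const_mul (lg' z))
      have e2 : HasDerivAt (fun u : ℝ => u^2/2 * lg z) (u * lg z) u := by
        have := ((hasDerivAt_pow 2 u).div_const 2).mul_const (lg z)
        convert this using 1
        · rfl
        · rfl
        ring
      simpa [Pi.sub_def] using e1.sub e2)
    (by simp)
    (fun u hu => H1 u hu) hh
  nlinarith

lemma lg_taylor_neg (z t : ℝ) (ht0 : 0 ≤ t) (ht1 : t ≤ 1) :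
    lg (z - t) ≤ lg z - lg' z * t + 3/4 * t^2 * lg z := by
  have hderiv_neg : ∀ u : ℝ, HasDerivAt (fun u : ℝ => lg (z - u)) (-lg' (z - u)) u := by
    intro u
    have h1 : HasDerivAt (fun u : ℝ => z - u) (-1) u := by
      simpa using ((hasDerivAt_id u).const_sub z)
    simpa [mul_comm, Function.comp_def] using (hasDerivAt_lg (z - u)).comp u h1
  have hderiv_neg' : ∀ u : ℝ, HasDerivAt (fun u : ℝ => -lg' (z - u)) (lg'' (z - u)) u := by
    intro u
    have h1 : HasDerivAt (fun u : ℝ => z - u) (-1) u := by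
      simpa using ((hasDerivAt_id u).const_sub z)
    simpa [mul_comm, Function.comp_def, Pi.neg_def] using ((hasDerivAt_lg' (z - u)).comp u h1).neg
  have G1 : ∀ u, 0 ≤ u → -lg' (z - u) + lg' z - (Real.exp u - 1) * lg z ≤ 0 := by
    intro u hu
    apply deriv_nonpos_aux (fun u => -lg' (z - u) + lg' z - (Real.exp u - 1) * lg z)
      (fun u => lg'' (z - u) - Real.exp u * lg z)
      (fun u => by
        have e2 : HasDerivAt (fun u : ℝ => (Real.exp u - 1) * lg z) (Real.exp u * lg z) u :=
          ((Real.hasDerivAt_exp u).sub_const 1).mul_const (lg z)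
        simpa [Pi.sub_def] using (((hderiv_neg' u).add_const (lg' z)).sub e2))
      (by simp)
      (fun u hu => by
        have h2 := lg''_le_lg (z - u)
        have h3 := lg_crude z u hu
        linarith)
      hu
  have G2 := deriv_nonpos_aux
    (fun u => lg (z - u) - lg z + lg' z * u - (Real.exp u - 1 - u) * lg z)
    (fun u => -lg' (z - u) + lg' z - (Real.exp u - 1) * lg z)
    (fun u => by
      have e2 : HasDerivAt (fun u : ℝ => (Real.exp u - 1 - u) * lg z)
          ((Real.exp u - 1) * lg z) u := by
        have := (((Real.hasDerivAt_exp u).sub_const 1).sub (hasDerivAt_id u)).mul_const (lg z)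
        convert this using 1 <;> rfl
      have e1 := ((hderiv_neg u).sub_const (lg z)).add ((hasDerivAt_id u).const_mul (lg' z))
      simpa [mul_comm, Pi.sub_def, Pi.add_def] using e1.sub e2)
    (by simp)
    (fun u hu => G1 u hu) ht0
  have hexp : Real.exp t - 1 - t ≤ 3/4 * t^2 := by
    have hb := Real.exp_bound (x := t) (by rw [abs_of_nonneg ht0]; exact ht1) (n := 2) (by norm_num)
    have hs : ∑ m ∈ Finset.range 2, t ^ m / (m.factorial : ℝ) = 1 + t := by
      simp [Finset.sum_range_succ]
    rw [hs] at hb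
    have := abs_le.1 hb
    rw [abs_of_nonneg ht0] at this
    norm_num at this ⊢
    nlinarith [this.2]
  have hlgz := lg_pos z
  nlinarith [G2]

lemma lg_taylor (z h : ℝ) (hh : |h| ≤ 1) :
    lg (z + h) ≤ lg z + lg' z * h + 3/4 * h^2 * lg z := by
  rcases le_total 0 h with h0 | h0
  · have := lg_taylor_pos z h h0
    have := lg_pos z
    nlinarith
  · have h1 : -h ≤ 1 := by rw [abs_of_nonpos h0] at hh; linarith
    have := lg_taylor_neg z (-h) (by linarith) h1
    have he : z - -h = z + h := by ring
    rw [he] at this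
    nlinarith [this]

open scoped RealInnerProductSpace



open scoped RealInnerProductSpace

/-- Gradient descent on separable logistic regression initialized at `w₀ = 0` with the
schedule `η₀ = 1/ln 2`, `η_t = S_{t-1}/(2 max{2F(w₀), ln²(S_{t-1})})` for `t ≥ 1`,
where `S_t = γ² ∑_{k≤t} η_k` and `F(w₀) = (1/n)∑ᵢ exp(−yᵢ⟨xᵢ,w₀⟩)`, satisfies
`L(w_t) ≤ 1/η_t` for all `t`, and consequently the loss is monotonically non-increasing. -/
theorem stmt_17 {d n : ℕ} (hn : 1 ≤ n) (x : Fin n → EuclideanSpace ℝ (Fin d))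
    (y : Fin n → ℝ) (hy : ∀ i, y i = 1 ∨ y i = -1) (hx : ∀ i, ‖x i‖ ≤ 1)
    (wstar : EuclideanSpace ℝ (Fin d)) (hwstar : ‖wstar‖ = 1)
    (γ : ℝ) (hγ : 0 < γ) (hmargin : ∀ i, γ ≤ y i * ⟪x i, wstar⟫)
    (L : EuclideanSpace ℝ (Fin d) → ℝ)
    (hL : L = fun w => (1 / (n : ℝ)) * ∑ i, Real.log (1 + Real.exp (-(y i * ⟪x i, w⟫))))
    (gradL : EuclideanSpace ℝ (Fin d) → EuclideanSpace ℝ (Fin d))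
    (hgrad : gradL = fun w =>
      (1 / (n : ℝ)) • ∑ i, (-(y i) / (1 + Real.exp (y i * ⟪x i, w⟫))) • x i)
    (F0 : ℝ) (hF0 : F0 = (1 / (n : ℝ)) * ∑ i, Real.exp (-(y i * ⟪x i, (0 : EuclideanSpace ℝ (Fin d))⟫)))
    (η : ℕ → ℝ) (S : ℕ → ℝ)
    (hS : ∀ t, S t = γ ^ 2 * ∑ k ∈ Finset.range (t + 1), η k)
    (hη0 : η 0 = 1 / Real.log 2)
    (hηrec : ∀ t, η (t + 1) = S t / (2 * max (2 * F0) ((Real.log (S t)) ^ 2)))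
    (w : ℕ → EuclideanSpace ℝ (Fin d)) (hw0 : w 0 = 0)
    (hupdate : ∀ t, w (t + 1) = w t - η t • gradL (w t)) :
    (∀ t, L (w t) ≤ 1 / η t) ∧ (∀ t, L (w (t + 1)) ≤ L (w t)) := by
  have hn0 : (0:ℝ) < (n:ℝ) := by exact_mod_cast hn
  have hn0' : ((n:ℝ)) ≠ 0 := ne_of_gt hn0
  have hyabs : ∀ i, |y i| = 1 := by
    intro i; rcases hy i with h | h <;> rw [h] <;> norm_num
  -- L in terms of lg
  have hLw : ∀ v, L v = (1/(n:ℝ)) * ∑ i, lg (y i * ⟪x i, v⟫) := by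
    intro v; rw [hL]; simp only [lg]
  -- gradient inner products
  have hgradInner : ∀ v u, ⟪gradL v, u⟫ =
      (1/(n:ℝ)) * ∑ i, lg' (y i * ⟪x i, v⟫) * (y i * ⟪x i, u⟫) := by
    intro v u
    rw [hgrad]
    simp only [real_inner_smul_left, sum_inner]
    congr 1
    apply Finset.sum_congr rfl
    intro i _
    rw [lg']
    ring
  have hLpos : ∀ v, 0 < L v := by
    intro v
    rw [hLw]
    apply mul_pos (by positivity)
    apply Finset.sum_pos (fun i _ => lg_pos _)
    have : Nonempty (Fin n) := Fin.pos_iff_nonempty.mp (by omega)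
    exact Finset.univ_nonempty
  have hgradNorm : ∀ v, ‖gradL v‖ ≤ L v := by
    intro v
    rw [hgrad, hLw]
    rw [norm_smul, Real.norm_eq_abs, abs_of_nonneg (by positivity : (0:ℝ) ≤ 1/(n:ℝ))]
    apply mul_le_mul_of_nonneg_left _ (by positivity : (0:ℝ) ≤ 1/(n:ℝ))
    calc ‖∑ i, (-(y i) / (1 + Real.exp (y i * ⟪x i, v⟫))) • x i‖
        ≤ ∑ i, ‖(-(y i) / (1 + Real.exp (y i * ⟪x i, v⟫))) • x i‖ :=
          norm_sum_le _ _
      _ ≤ ∑ i, lg (y i * ⟪x i, v⟫) := by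
          apply Finset.sum_le_sum
          intro i _
          rw [norm_smul, Real.norm_eq_abs]
          have h1 : |(-(y i) / (1 + Real.exp (y i * ⟪x i, v⟫)))| =
              -lg' (y i * ⟪x i, v⟫) := by
            rw [abs_div, abs_neg, hyabs i, lg', neg_neg,
              abs_of_pos (one_add_exp_pos _), one_div]
          rw [h1]
          calc -lg' (y i * ⟪x i, v⟫) * ‖x i‖ ≤ -lg' (y i * ⟪x i, v⟫) * 1 := by
                apply mul_le_mul_of_nonneg_left (hx i)
                have := lg'_neg (y i * ⟪x i, v⟫); linarith
            _ ≤ lg (y i * ⟪x i, v⟫) := by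
                rw [mul_one]; exact neg_lg'_le_lg _
  have hconv : ∀ v u, L v - L u ≤ ⟪gradL v, v - u⟫ := by
    intro v u
    rw [hgradInner v (v - u), hLw v, hLw u]
    rw [← mul_sub, ← Finset.sum_sub_distrib]
    apply mul_le_mul_of_nonneg_left _ (by positivity : (0:ℝ) ≤ 1/(n:ℝ))
    apply Finset.sum_le_sum
    intro i _
    have h1 : y i * ⟪x i, v - u⟫ = y i * ⟪x i, v⟫ - y i * ⟪x i, u⟫ := by
      rw [inner_sub_right]; ring
    rw [h1]
    have := lg_convex (y i * ⟪x i, v⟫) (y i * ⟪x i, u⟫)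
    nlinarith [this]
  -- one step: descent and telescoping inequality
  have hstep : ∀ (v : EuclideanSpace ℝ (Fin d)) (c : ℝ), 0 ≤ c → c * L v ≤ 1 →
      L (v - c • gradL v) ≤ L v := by
    intro v c hc hcl
    set g := gradL v with hg
    set z : Fin n → ℝ := fun i => y i * ⟪x i, v⟫ with hz
    set a : Fin n → ℝ := fun i => y i * ⟪x i, g⟫ with ha
    have hzi : ∀ i, y i * ⟪x i, v - c • g⟫ = z i + (-(c * a i)) := by
      intro i
      rw [inner_sub_right, inner_smul_right, hz, ha]
      ring
    have hgg : (1/(n:ℝ)) * ∑ i, lg' (z i) * a i = ‖g‖^2 := by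
      rw [← hgradInner v g, real_inner_self_eq_norm_sq]
    have hga : ∀ i, |a i| ≤ ‖g‖ := by
      intro i
      rw [ha]
      calc |y i * ⟪x i, g⟫| = |y i| * |⟪x i, g⟫| := abs_mul _ _
        _ = |⟪x i, g⟫| := by rw [hyabs i, one_mul]
        _ ≤ ‖x i‖ * ‖g‖ := abs_real_inner_le_norm _ _
        _ ≤ 1 * ‖g‖ := mul_le_mul_of_nonneg_right (hx i) (norm_nonneg _)
        _ = ‖g‖ := one_mul _
    have hgL : ‖g‖ ≤ L v := hgradNorm v
    have hcg : c * ‖g‖ ≤ 1 := by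
      calc c * ‖g‖ ≤ c * L v := mul_le_mul_of_nonneg_left hgL hc
        _ ≤ 1 := hcl
    have hper : ∀ i, lg (z i + (-(c * a i))) ≤
        lg (z i) - c * (lg' (z i) * a i) + 3/4 * c^2 * ‖g‖^2 * lg (z i) := by
      intro i
      have habs : |(-(c * a i))| ≤ 1 := by
        rw [abs_neg, abs_mul, abs_of_nonneg hc]
        calc c * |a i| ≤ c * ‖g‖ := mul_le_mul_of_nonneg_left (hga i) hc
          _ ≤ 1 := hcg
      have ht := lg_taylor (z i) (-(c * a i)) habs
      have hsq : (-(c * a i))^2 ≤ c^2 * ‖g‖^2 := by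
        have h1 : (a i)^2 ≤ ‖g‖^2 := by
          have := hga i
          nlinarith [abs_nonneg (a i), neg_abs_le (a i), le_abs_self (a i)]
        nlinarith [sq_nonneg c]
      have hlgz := lg_pos (z i)
      nlinarith [ht, hsq, hlgz]
    have hLle : L (v - c • g) ≤ L v - c * ‖g‖^2 + 3/4 * c^2 * ‖g‖^2 * L v := by
      rw [hLw (v - c • g)]
      have h1 : ∑ i, lg (y i * ⟪x i, v - c • g⟫) ≤
          ∑ i, (lg (z i) - c * (lg' (z i) * a i) + 3/4 * c^2 * ‖g‖^2 * lg (z i)) := by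
        apply Finset.sum_le_sum
        intro i _
        rw [hzi i]
        exact hper i
      calc (1/(n:ℝ)) * ∑ i, lg (y i * ⟪x i, v - c • g⟫)
          ≤ (1/(n:ℝ)) * ∑ i, (lg (z i) - c * (lg' (z i) * a i)
              + 3/4 * c^2 * ‖g‖^2 * lg (z i)) := by
            apply mul_le_mul_of_nonneg_left h1 (by positivity)
        _ = L v - c * ‖g‖^2 + 3/4 * c^2 * ‖g‖^2 * L v := by
            rw [hLw v, ← hgg]
            rw [Finset.sum_add_distrib, Finset.sum_sub_distrib, ← Finset.mul_sum,
              ← Finset.mul_sum]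
            ring
    have hfinal : 3/4 * c^2 * ‖g‖^2 * L v ≤ 3/4 * c * ‖g‖^2 := by
      have hx1 : (c * L v) * (c * ‖g‖^2) ≤ 1 * (c * ‖g‖^2) :=
        mul_le_mul_of_nonneg_right hcl (by positivity)
      nlinarith [hx1]
    have hcg2 : 0 ≤ c * ‖g‖^2 := by positivity
    linarith
  have htel : ∀ (v u : EuclideanSpace ℝ (Fin d)) (c : ℝ), 0 ≤ c → c * L v ≤ 1 →
      c * L v ≤ ‖v - u‖^2 - ‖(v - c • gradL v) - u‖^2 + 2 * c * L u := by
    intro v u c hc hcl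
    set g := gradL v with hg
    have hexp : ‖(v - c • g) - u‖^2 = ‖v - u‖^2 - 2 * (c * ⟪gradL v, v - u⟫)
        + c^2 * ‖g‖^2 := by
      have h1 : (v - c • g) - u = (v - u) - c • g := by abel
      rw [h1, norm_sub_sq_real, real_inner_smul_right, norm_smul, Real.norm_eq_abs,
        mul_pow, sq_abs, real_inner_comm]
    have hconv' := hconv v u
    have hgL : ‖g‖ ≤ L v := hgradNorm v
    have hsq : c^2 * ‖g‖^2 ≤ c * L v := by
      have h1 : c * ‖g‖ ≤ c * L v := mul_le_mul_of_nonneg_left hgL hc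
      have h2 : 0 ≤ c * ‖g‖ := by positivity
      nlinarith
    have hnn : 0 ≤ ‖(v - c • g) - u‖^2 := sq_nonneg _
    nlinarith [mul_le_mul_of_nonneg_left hconv' hc]
  -- F0 = 1
  have hF1 : F0 = 1 := by
    rw [hF0]
    have : ∀ i : Fin n, Real.exp (-(y i * ⟪x i, (0 : EuclideanSpace ℝ (Fin d))⟫)) = 1 := by
      intro i; rw [inner_zero_right, mul_zero, neg_zero, Real.exp_zero]
    rw [Finset.sum_congr rfl (fun i _ => this i), Finset.sum_const, Finset.card_univ,
      Fintype.card_fin, nsmul_eq_mul, mul_one]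
    field_simp
  -- L at zero
  have hL0 : L 0 = Real.log 2 := by
    rw [hLw]
    have : ∀ i : Fin n, lg (y i * ⟪x i, (0 : EuclideanSpace ℝ (Fin d))⟫) = Real.log 2 := by
      intro i
      rw [inner_zero_right, mul_zero, lg, neg_zero, Real.exp_zero]
      norm_num
    rw [Finset.sum_congr rfl (fun i _ => this i), Finset.sum_const, Finset.card_univ,
      Fintype.card_fin, nsmul_eq_mul]
    field_simp
  have hlog2 : (0:ℝ) < Real.log 2 := Real.log_pos one_lt_two
  -- positivity of eta and S
  have ηposall : ∀ t, ∀ k, k ≤ t → 0 < η k := by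
    intro t
    induction t with
    | zero =>
      intro k hk
      rw [Nat.le_zero] at hk; subst hk
      rw [hη0]; positivity
    | succ t ih =>
      intro k hk
      rcases Nat.lt_succ_iff_lt_or_eq.mp (Nat.lt_succ_of_le hk) with h | h
      · exact ih k (Nat.lt_succ_iff.mp h)
      · subst h
        rw [hηrec t]
        apply div_pos
        · rw [hS t]
          apply mul_pos (by positivity)
          apply Finset.sum_pos (fun i hi => ih i (Nat.lt_succ_iff.mp (Finset.mem_range.mp hi)))
          exact Finset.nonempty_range_iff.mpr (Nat.succ_ne_zero t)
        · have h1 : (2:ℝ) ≤ max (2 * F0) ((Real.log (S t))^2) := by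
            rw [hF1]; norm_num
          linarith
  have ηpos : ∀ t, 0 < η t := fun t => ηposall t t le_rfl
  have Spos : ∀ t, 0 < S t := by
    intro t
    rw [hS t]
    apply mul_pos (by positivity)
    apply Finset.sum_pos (fun i hi => ηpos i)
    exact Finset.nonempty_range_iff.mpr (Nat.succ_ne_zero t)
  have hinv : ∀ t, 1 / η (t+1) = 2 * max 2 ((Real.log (S t))^2) / S t := by
    intro t
    rw [hηrec t, hF1, one_div_div]
    norm_num
  -- main induction
  have main : ∀ t, ∀ k, k ≤ t → L (w k) ≤ 1 / η k := by
    intro t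
    induction t with
    | zero =>
      intro k hk
      rw [Nat.le_zero] at hk; subst hk
      rw [hw0, hL0, hη0, one_div_one_div]
    | succ t IH =>
      intro k hk
      rcases Nat.lt_succ_iff_lt_or_eq.mp (Nat.lt_succ_of_le hk) with h | h
      · exact IH k (Nat.lt_succ_iff.mp h)
      subst h
      -- stability for all j ≤ t
      have stab : ∀ j, j ≤ t → η j * L (w j) ≤ 1 := by
        intro j hj
        have h1 := IH j hj
        have h2 := ηpos j
        calc η j * L (w j) ≤ η j * (1 / η j) := mul_le_mul_of_nonneg_left h1 h2.le
          _ = 1 := by field_simp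
      have mono : ∀ j, j ≤ t → L (w (j+1)) ≤ L (w j) := by
        intro j hj
        rw [hupdate j]
        exact hstep (w j) (η j) (ηpos j).le (stab j hj)
      have chain : ∀ j k', j ≤ k' → k' ≤ t + 1 → L (w k') ≤ L (w j) := by
        intro j k' hjk hkt
        induction k', hjk using Nat.le_induction with
        | base => exact le_rfl
        | succ m hm ih =>
          have hm' : m ≤ t := by omega
          exact le_trans (mono m hm') (ih (by omega))
      -- telescoping bound for any comparator u
      have tele : ∀ u : EuclideanSpace ℝ (Fin d),
          L (w (t+1)) ≤ γ^2 * ‖u‖^2 / S t + 2 * L u := by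
        intro u
        have hper : ∀ j ∈ Finset.range (t+1), η j * L (w (t+1)) ≤
            (‖w j - u‖^2 - ‖w (j+1) - u‖^2) + 2 * (η j * L u) := by
          intro j hj
          have hjt : j ≤ t := Nat.lt_succ_iff.mp (Finset.mem_range.mp hj)
          have h1 := htel (w j) u (η j) (ηpos j).le (stab j hjt)
          rw [← hupdate j] at h1
          have h2 : L (w (t+1)) ≤ L (w j) := chain j (t+1) (by omega) le_rfl
          have h3 : η j * L (w (t+1)) ≤ η j * L (w j) :=
            mul_le_mul_of_nonneg_left h2 (ηpos j).le
          linarith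
        have hsum := Finset.sum_le_sum hper
        have hlhs : ∑ j ∈ Finset.range (t+1), η j * L (w (t+1)) =
            (∑ j ∈ Finset.range (t+1), η j) * L (w (t+1)) := by
          rw [Finset.sum_mul]
        have hA : ∑ j ∈ Finset.range (t+1), (‖w j - u‖^2 - ‖w (j+1) - u‖^2)
            = ‖w 0 - u‖^2 - ‖w (t+1) - u‖^2 :=
          Finset.sum_range_sub' (fun j => ‖w j - u‖^2) (t+1)
        have hsplit : ∑ j ∈ Finset.range (t+1),
            ((‖w j - u‖^2 - ‖w (j+1) - u‖^2) + 2 * (η j * L u)) =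
            (‖w 0 - u‖^2 - ‖w (t+1) - u‖^2)
              + 2 * ((∑ j ∈ Finset.range (t+1), η j) * L u) := by
          rw [Finset.sum_add_distrib, hA, ← Finset.mul_sum, Finset.sum_mul]
        rw [hlhs, hsplit] at hsum
        have hw0u : ‖w 0 - u‖^2 = ‖u‖^2 := by
          rw [hw0, zero_sub, norm_neg]
        rw [hw0u] at hsum
        have hsum_eq : ∑ j ∈ Finset.range (t + 1), η j = S t / γ^2 := by
          rw [hS t]; field_simp
        rw [hsum_eq] at hsum
        have hAp : 0 < S t / γ^2 := div_pos (Spos t) (by positivity)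
        have hγ' : γ ≠ 0 := ne_of_gt hγ
        have hS' : S t ≠ 0 := ne_of_gt (Spos t)
        have hnn : 0 ≤ ‖w (t+1) - u‖^2 := sq_nonneg _
        have hkey : (S t / γ^2) * L (w (t+1)) ≤ ‖u‖^2 + 2 * ((S t / γ^2) * L u) := by
          linarith
        have hkey2 : L (w (t+1)) ≤ (‖u‖^2 + 2 * ((S t / γ^2) * L u)) / (S t / γ^2) := by
          rw [le_div_iff₀ hAp, mul_comm]
          exact hkey
        have hrhs : (‖u‖^2 + 2 * ((S t / γ^2) * L u)) / (S t / γ^2) =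
            γ^2 * ‖u‖^2 / S t + 2 * L u := by
          field_simp
        rw [hrhs] at hkey2
        exact hkey2
      rw [hinv t]
      rcases le_or_gt 1 (S t) with hS1 | hS1
      · -- large S: comparator along wstar
        set r := Real.log (S t) with hr
        have hr0 : 0 ≤ r := Real.log_nonneg hS1
        set u : EuclideanSpace ℝ (Fin d) := (r/γ) • wstar with hu
        have hnormu : ‖u‖^2 = r^2/γ^2 := by
          rw [hu, norm_smul, Real.norm_eq_abs, hwstar, mul_one, sq_abs, div_pow]
        have hLu : L u ≤ 1 / S t := by
          rw [hLw]
          have hperi : ∀ i : Fin n, lg (y i * ⟪x i, u⟫) ≤ 1 / S t := by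
            intro i
            have h1 : ⟪x i, u⟫ = (r/γ) * ⟪x i, wstar⟫ := real_inner_smul_right _ _ _
            have h2 : r ≤ y i * ⟪x i, u⟫ := by
              rw [h1]
              have h3 := hmargin i
              have h4 : (r/γ) * γ ≤ (r/γ) * (y i * ⟪x i, wstar⟫) :=
                mul_le_mul_of_nonneg_left h3 (by positivity)
              have h5 : (r/γ) * γ = r := by field_simp
              calc r = (r/γ) * γ := h5.symm
                _ ≤ (r/γ) * (y i * ⟪x i, wstar⟫) := h4
                _ = y i * ((r/γ) * ⟪x i, wstar⟫) := by ring
            calc lg (y i * ⟪x i, u⟫) ≤ lg r := lg_anti h2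
              _ ≤ Real.exp (-r) := lg_le_exp_neg r
              _ = 1 / S t := by rw [Real.exp_neg, hr, Real.exp_log (Spos t), one_div]
          calc (1/(n:ℝ)) * ∑ i, lg (y i * ⟪x i, u⟫)
              ≤ (1/(n:ℝ)) * ∑ _i : Fin n, 1 / S t :=
                mul_le_mul_of_nonneg_left (Finset.sum_le_sum (fun i _ => hperi i))
                  (by positivity)
            _ = 1 / S t := by
                rw [Finset.sum_const, Finset.card_univ, Fintype.card_fin, nsmul_eq_mul]
                field_simp
        have h1 := tele u
        rw [hnormu] at h1
        have he : γ^2 * (r^2/γ^2) = r^2 := by field_simp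
        rw [he] at h1
        have hstep1 : L (w (t+1)) ≤ (r^2 + 2) / S t := by
          have heq : r^2 / S t + 2 * (1 / S t) = (r^2 + 2) / S t := by
            rw [mul_one_div, ← add_div]
          have h2 : 2 * L u ≤ 2 * (1 / S t) := by linarith
          linarith
        have hmax : r^2 + 2 ≤ 2 * max 2 (r^2) := by
          rcases le_total (r^2) 2 with h | h
          · rw [max_eq_left h]; linarith
          · rw [max_eq_right h]; linarith
        calc L (w (t+1)) ≤ (r^2 + 2) / S t := hstep1
          _ ≤ 2 * max 2 (r^2) / S t := (div_le_div_iff_of_pos_right (Spos t)).mpr hmax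
          _ = 2 * max 2 ((Real.log (S t))^2) / S t := by rw [hr]
      · -- small S: comparator zero
        have h1 := tele 0
        rw [norm_zero, hL0] at h1
        have h2 : γ^2 * 0^2 / S t = 0 := by simp
        rw [h2, zero_add] at h1
        have hlog2' : Real.log 2 < 1 := by
          have := Real.log_two_lt_d9; linarith
        have h3 : (4:ℝ) ≤ 4 / S t := by
          rw [le_div_iff₀ (Spos t)]; nlinarith
        have h4 : 4 / S t ≤ 2 * max 2 ((Real.log (S t))^2) / S t := by
          apply (div_le_div_iff_of_pos_right (Spos t)).mpr
          have := le_max_left (2:ℝ) ((Real.log (S t))^2)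
          linarith
        linarith
  constructor
  · exact fun t => main t t le_rfl
  · intro t
    rw [hupdate t]
    apply hstep (w t) (η t) (ηpos t).le
    have h1 := main t t le_rfl
    have h2 := ηpos t
    calc η t * L (w t) ≤ η t * (1 / η t) := mul_le_mul_of_nonneg_left h1 h2.le
      _ = 1 := by field_simp
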